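/- There exists $C > 0$ such that for all $t \geq 0$ and $x \in \mathbb{R}^3$: $\int_0^t e^{-(t-s)} (1+s)^{-4}\big(1+\tfrac{(|x|-cs)^2}{1+s}\big)^{-3}\,ds \leq C(1+t)^{-2}\big(1+\tfrac{|x|^2}{1+t}\big)^{-r}$ for any fixed $r$ with $3/2 < r \leq 2$ and fixed $c > 0$. -/

import Mathlib

open MeasureTheory

namespace Stmt16Aux

lemma poly_exp (u : ℝ) (hu : 0 ≤ u) : (1+u)^4 ≤ 4096 * Real.exp (u/2) := by
  have h1 : 1 + u/8 ≤ Real.exp (u/8) := by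
    have := Real.add_one_le_exp (u/8); linarith
  have h2 : (1+u) ≤ 8 * Real.exp (u/8) := by nlinarith
  have h3 : (1+u)^4 ≤ (8 * Real.exp (u/8))^4 := pow_le_pow_left₀ (by linarith) h2 4
  calc (1+u)^4 ≤ (8 * Real.exp (u/8))^4 := h3
    _ = 4096 * (Real.exp (u/8))^4 := by ring
    _ = 4096 * Real.exp (u/2) := by rw [← Real.exp_nat_mul]; norm_num; ring_nf

lemma core0 (s t : ℝ) (hs : 0 ≤ s) (hst : s ≤ t) :
    (1+t)^4 ≤ 4096 * Real.exp ((t-s)/2) * (1+s)^4 := by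
  set u := t - s with hu
  have hu0 : 0 ≤ u := by simp [hu]; linarith
  have h1 : 1 + t ≤ (1+s)*(1+u) := by nlinarith
  have h2 : (1+t)^4 ≤ ((1+s)*(1+u))^4 := pow_le_pow_left₀ (by linarith) h1 4
  have h3 := poly_exp u hu0
  have h4 : (0:ℝ) ≤ (1+s)^4 := by positivity
  calc (1+t)^4 ≤ (1+s)^4 * (1+u)^4 := by rw [← mul_pow] at *; exact h2
    _ ≤ (1+s)^4 * (4096 * Real.exp (u/2)) := mul_le_mul_of_nonneg_left h3 h4
    _ = 4096 * Real.exp ((t-s)/2) * (1+s)^4 := by rw [hu]; ring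


lemma step2_lem (c t s R : ℝ) (hR : 0 ≤ R) (hs : 0 ≤ s) (hst : s ≤ t) :
    1 + R ^ 2 / (1 + t) ≤ (2 + 2 * c ^ 2) * (1 + t) * (1 + (R - c * s) ^ 2 / (1 + s)) := by
  have hS : (0:ℝ) < 1 + s := by linarith
  have hT : (0:ℝ) < 1 + t := by linarith
  have e1 : 1 + R ^ 2 / (1 + t) = ((1+t) + R^2)/(1+t) := by field_simp
  have e2 : (2 + 2*c^2) * (1+t) * (1 + (R - c*s)^2/(1+s))
      = ((2 + 2*c^2) * (1+t) * ((1+s) + (R - c*s)^2))/(1+s) := by field_simp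
  rw [e1, e2, div_le_div_iff₀ hT hS]
  have h1 : R^2 ≤ 2*(R - c*s)^2 + 2*c^2*s^2 := by nlinarith [sq_nonneg (R - 2*c*s)]
  have h2 : R^2*(1+s) ≤ (2*(R - c*s)^2 + 2*c^2*s^2)*(1+s) :=
    mul_le_mul_of_nonneg_right h1 hS.le
  have hst2 : (1+s) ≤ (1+t)^2 := by nlinarith
  have hq1 : 2*(R-c*s)^2*(1+s) ≤ 2*(R-c*s)^2*(1+t)^2 :=
    mul_le_mul_of_nonneg_left hst2 (by positivity)
  have hsq : s^2 ≤ (1+t)^2 := by nlinarith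
  have hs2 : 2*c^2*s^2 ≤ 2*c^2*(1+t)^2 :=
    mul_le_mul_of_nonneg_left hsq (by positivity)
  have hq2 : 2*c^2*s^2*(1+s) ≤ 2*c^2*(1+t)^2*(1+s) :=
    mul_le_mul_of_nonneg_right hs2 hS.le
  have hq3 : (1+t)*(1+s) ≤ 2*(1+t)^2*(1+s) := by nlinarith
  have hq4 : (0:ℝ) ≤ 2*c^2*(1+t)^2*(R-c*s)^2 := by positivity
  nlinarith [h2, hq1, hq2, hq3, hq4]

lemma key_bound (c r t s R : ℝ) (hc : 0 < c) (hr₁ : 3/2 < r) (hr₂ : r ≤ 2)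
    (hR : 0 ≤ R) (hs : 0 ≤ s) (hst : s ≤ t) :
    Real.exp (-(t-s)) * (1+s)^(-(4:ℝ)) * (1+(R - c*s)^2/(1+s))^(-(3:ℝ))
      ≤ 4096 * (2+2*c^2)^2 * (1+t)^(-(2:ℝ)) * (1+R^2/(1+t))^(-r) * Real.exp ((s-t)/2) := by
  have hS : (0:ℝ) < 1 + s := by linarith
  have hT : (0:ℝ) < 1 + t := by linarith
  set A := 1 + (R - c*s)^2/(1+s) with hAdef
  set P := 1 + R^2/(1+t) with hPdef
  set K := (2:ℝ) + 2*c^2 with hKdef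
  have hA1 : 1 ≤ A := by
    have : 0 ≤ (R - c*s)^2/(1+s) := by positivity
    rw [hAdef]; linarith
  have hA0 : (0:ℝ) < A := by linarith
  have hP1 : 1 ≤ P := by
    have : 0 ≤ R^2/(1+t) := by positivity
    rw [hPdef]; linarith
  have hP0 : (0:ℝ) < P := by linarith
  have hK1 : (1:ℝ) ≤ K := by rw [hKdef]; nlinarith
  have hr0 : (0:ℝ) ≤ r := by linarith
  -- step 2
  have step2 : P ≤ K * (1+t) * A := by
    rw [hPdef, hKdef, hAdef]; exact step2_lem c t s R hR hs hst
  -- step 1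
  have step1 : A^(-(3:ℝ)) ≤ A^(-r) :=
    Real.rpow_le_rpow_of_exponent_le hA1 (by linarith)
  -- step 3
  have hKT : (0:ℝ) < K * (1+t) := by positivity
  have step3 : A^(-r) ≤ (K*(1+t))^r * P^(-r) := by
    have hdiv : P / A ≤ K*(1+t) := (div_le_iff₀ hA0).2 (by linarith)
    have h5 : (P/A)^r ≤ (K*(1+t))^r := Real.rpow_le_rpow (by positivity) hdiv hr0
    have hid : A^(-r) = (P/A)^r * P^(-r) := by
      rw [Real.div_rpow hP0.le hA0.le, Real.rpow_neg hP0.le, Real.rpow_neg hA0.le]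
      have hPr : P^r ≠ 0 := ne_of_gt (Real.rpow_pos_of_pos hP0 r)
      field_simp
    rw [hid]
    exact mul_le_mul_of_nonneg_right h5 (Real.rpow_nonneg hP0.le _)
  have step4 : (K*(1+t))^r = K^r * (1+t)^r := Real.mul_rpow (by positivity) hT.le
  have step5 : K^r ≤ K^2 := by
    have h := Real.rpow_le_rpow_of_exponent_le hK1 hr₂
    rwa [show ((2:ℝ)) = ((2:ℕ):ℝ) by norm_num, Real.rpow_natCast] at h
  -- step 6
  have step6 : Real.exp (-(t-s)) * (1+s)^(-(4:ℝ))
      ≤ 4096 * Real.exp ((s-t)/2) * (1+t)^(-(4:ℝ)) := by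
    have e4s : (1+s)^(-(4:ℝ)) = ((1+s)^4)⁻¹ := by
      rw [Real.rpow_neg hS.le, show ((4:ℝ)) = ((4:ℕ):ℝ) by norm_num, Real.rpow_natCast]
    have e4t : (1+t)^(-(4:ℝ)) = ((1+t)^4)⁻¹ := by
      rw [Real.rpow_neg hT.le, show ((4:ℝ)) = ((4:ℕ):ℝ) by norm_num, Real.rpow_natCast]
    rw [e4s, e4t]
    have hexp : Real.exp (-(t-s)) = Real.exp ((s-t)/2) * Real.exp ((s-t)/2) := by
      rw [← Real.exp_add]; ring_nf
    rw [hexp]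
    have hF : Real.exp ((s-t)/2) = (Real.exp ((t-s)/2))⁻¹ := by
      rw [← Real.exp_neg]; ring_nf
    have hc0 := core0 s t hs hst
    have key : Real.exp ((s-t)/2) * ((1+s)^4)⁻¹ ≤ 4096 * ((1+t)^4)⁻¹ := by
      rw [hF]
      have h1 : (1:ℝ) / (Real.exp ((t-s)/2) * (1+s)^4) ≤ 4096 / (1+t)^4 := by
        rw [div_le_div_iff₀ (by positivity) (by positivity)]
        nlinarith [hc0]
      calc (Real.exp ((t-s)/2))⁻¹ * ((1+s)^4)⁻¹
          = 1 / (Real.exp ((t-s)/2) * (1+s)^4) := by rw [one_div, mul_inv]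
        _ ≤ 4096 / (1+t)^4 := h1
        _ = 4096 * ((1+t)^4)⁻¹ := by rw [div_eq_mul_inv]
    calc Real.exp ((s-t)/2) * Real.exp ((s-t)/2) * ((1+s)^4)⁻¹
        = Real.exp ((s-t)/2) * (Real.exp ((s-t)/2) * ((1+s)^4)⁻¹) := by ring
      _ ≤ Real.exp ((s-t)/2) * (4096 * ((1+t)^4)⁻¹) :=
          mul_le_mul_of_nonneg_left key (Real.exp_nonneg _)
      _ = 4096 * Real.exp ((s-t)/2) * ((1+t)^4)⁻¹ := by ring
  -- assembly
  have m1 : (0:ℝ) ≤ Real.exp (-(t-s)) * (1+s)^(-(4:ℝ)) := by positivity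
  have b1 : A^(-(3:ℝ)) ≤ K^2 * (1+t)^r * P^(-r) := by
    calc A^(-(3:ℝ)) ≤ A^(-r) := step1
      _ ≤ (K*(1+t))^r * P^(-r) := step3
      _ = K^r * (1+t)^r * P^(-r) := by rw [step4]
      _ ≤ K^2 * (1+t)^r * P^(-r) := by
          apply mul_le_mul_of_nonneg_right _ (Real.rpow_nonneg hP0.le _)
          exact mul_le_mul_of_nonneg_right step5 (Real.rpow_nonneg hT.le _)
  have e7 : (1+t)^(-(4:ℝ)) * (1+t)^r = (1+t)^(-4+r) := (Real.rpow_add hT _ _).symm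
  have e8 : (1+t)^(-4+r) ≤ (1+t)^(-(2:ℝ)) :=
    Real.rpow_le_rpow_of_exponent_le (by linarith) (by linarith)
  calc Real.exp (-(t-s)) * (1+s)^(-(4:ℝ)) * A^(-(3:ℝ))
      ≤ Real.exp (-(t-s)) * (1+s)^(-(4:ℝ)) * (K^2 * (1+t)^r * P^(-r)) :=
        mul_le_mul_of_nonneg_left b1 m1
    _ ≤ (4096 * Real.exp ((s-t)/2) * (1+t)^(-(4:ℝ))) * (K^2 * (1+t)^r * P^(-r)) :=
        mul_le_mul_of_nonneg_right step6 (by positivity)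
    _ = 4096 * K^2 * ((1+t)^(-(4:ℝ)) * (1+t)^r) * P^(-r) * Real.exp ((s-t)/2) := by ring
    _ = 4096 * K^2 * (1+t)^(-4+r) * P^(-r) * Real.exp ((s-t)/2) := by rw [e7]
    _ ≤ 4096 * K^2 * (1+t)^(-(2:ℝ)) * P^(-r) * Real.exp ((s-t)/2) := by
        have h0 : (0:ℝ) ≤ 4096 * K^2 := by positivity
        have h1 : (0:ℝ) ≤ P^(-r) := Real.rpow_nonneg hP0.le _
        have h2 : (0:ℝ) ≤ Real.exp ((s-t)/2) := Real.exp_nonneg _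
        gcongr

end Stmt16Aux

open Stmt16Aux in
theorem stmt_16 (c r : ℝ) (hc : 0 < c) (hr₁ : 3 / 2 < r) (hr₂ : r ≤ 2) :
    ∃ C > 0, ∀ (t : ℝ), 0 ≤ t → ∀ x : EuclideanSpace ℝ (Fin 3),
      (∫ s in (0 : ℝ)..t,
          Real.exp (-(t - s)) * (1 + s) ^ (-(4 : ℝ)) *
            (1 + (‖x‖ - c * s) ^ 2 / (1 + s)) ^ (-(3 : ℝ)))
        ≤ C * (1 + t) ^ (-(2 : ℝ)) * (1 + ‖x‖ ^ 2 / (1 + t)) ^ (-r) := by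
  refine ⟨8192 * (2+2*c^2)^2, by positivity, ?_⟩
  intro t ht x
  set R := ‖x‖ with hRdef
  have hR : 0 ≤ R := norm_nonneg x
  have hT : (0:ℝ) < 1 + t := by linarith
  set M : ℝ := 4096 * (2+2*c^2)^2 * (1+t)^(-(2:ℝ)) * (1+R^2/(1+t))^(-r) with hM
  have hM0 : 0 ≤ M := by
    have : (0:ℝ) < 1 + R^2/(1+t) := by positivity
    rw [hM]; positivity
  set f : ℝ → ℝ := fun s =>
    Real.exp (-(t - s)) * (1 + s) ^ (-(4 : ℝ)) * (1 + (R - c * s) ^ 2 / (1 + s)) ^ (-(3 : ℝ))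
    with hf
  set g : ℝ → ℝ := fun s => M * Real.exp ((s - t)/2) with hg
  have huIcc : Set.uIcc (0:ℝ) t = Set.Icc 0 t := Set.uIcc_of_le ht
  -- continuity / integrability
  have hfc : ContinuousOn f (Set.uIcc (0:ℝ) t) := by
    rw [huIcc]
    have c1 : Continuous fun s : ℝ => Real.exp (-(t - s)) := by continuity
    have c2 : ContinuousOn (fun s : ℝ => (1 + s) ^ (-(4:ℝ))) (Set.Icc 0 t) := by
      apply ContinuousOn.rpow_const (by fun_prop)
      intro s hs; left; have := hs.1; positivity
    have c3 : ContinuousOn (fun s : ℝ => (1 + (R - c * s) ^ 2 / (1 + s)) ^ (-(3:ℝ)))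
        (Set.Icc 0 t) := by
      apply ContinuousOn.rpow_const
      · apply ContinuousOn.add continuousOn_const
        apply ContinuousOn.div (by fun_prop) (by fun_prop)
        intro s hs; have := hs.1; positivity
      · intro s hs; left; have h1 := hs.1
        have : 0 ≤ (R - c * s) ^ 2 / (1 + s) := by positivity
        positivity
    exact (c1.continuousOn.mul c2).mul c3
  have hfi : IntervalIntegrable f volume 0 t := hfc.intervalIntegrable
  have hgc : Continuous g := by fun_prop
  have hgi : IntervalIntegrable g volume 0 t := hgc.intervalIntegrable _ _
  have hmono : ∀ s ∈ Set.Icc (0:ℝ) t, f s ≤ g s := by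
    intro s hs
    have := key_bound c r t s R hc hr₁ hr₂ hR hs.1 hs.2
    simpa [hf, hg, hM, mul_comm, mul_assoc, mul_left_comm] using this
  have hint : (∫ s in (0:ℝ)..t, Real.exp ((s - t)/2)) = 2 - 2 * Real.exp ((0 - t)/2) := by
    have hD : ∀ u ∈ Set.uIcc (0:ℝ) t,
        HasDerivAt (fun s : ℝ => 2 * Real.exp ((s - t)/2)) (Real.exp ((u - t)/2)) u := by
      intro u _
      have h1 : HasDerivAt (fun s : ℝ => (s - t)/2) (1/2) u := by
        simpa using ((hasDerivAt_id u).sub_const t).div_const 2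
      have h2 := (h1.exp).const_mul (2:ℝ)
      exact h2.congr_deriv (by ring)
    have hci : IntervalIntegrable (fun s : ℝ => Real.exp ((s - t)/2)) volume 0 t :=
      (by fun_prop : Continuous fun s : ℝ => Real.exp ((s - t)/2)).intervalIntegrable _ _
    rw [intervalIntegral.integral_eq_sub_of_hasDerivAt hD hci]
    have : ((t:ℝ) - t)/2 = 0 := by ring
    rw [this, Real.exp_zero]; ring
  calc (∫ s in (0:ℝ)..t, f s) ≤ ∫ s in (0:ℝ)..t, g s :=
        intervalIntegral.integral_mono_on ht hfi hgi hmono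
    _ = M * ∫ s in (0:ℝ)..t, Real.exp ((s - t)/2) := by
        rw [hg]; exact intervalIntegral.integral_const_mul M _
    _ = M * (2 - 2 * Real.exp ((0 - t)/2)) := by rw [hint]
    _ ≤ M * 2 := by nlinarith [Real.exp_nonneg ((0 - t)/2), hM0]
    _ = 8192 * (2+2*c^2)^2 * (1 + t) ^ (-(2 : ℝ)) * (1 + R ^ 2 / (1 + t)) ^ (-r) := by
        rw [hM]; ring
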